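/- arXiv:0712.4253 — 2 statements merged into one kernel-verified Lean document; each statement's English description precedes it below -/
import Mathlib

section
/- Riemann addition formula for theta functions: for nonzero complex numbers t₁, t₂, t₃, z and |p| < 1, one has t₃ θ_p(t₂t₃) θ_p(t₂/t₃) θ_p(t₁z) θ_p(t₁/z) + t₁ θ_p(t₃t₁) θ_p(t₃/t₁) θ_p(t₂z) θ_p(t₂/z) + t₂ θ_p(t₁t₂) θ_p(t₁/t₂) θ_p(t₃z) θ_p(t₃/z) = 0. -/
open Complex Topology Filter Finset Metric intervalIntegral Real Set MeasureTheory

/-- The elliptic theta function `θ_p(z) = ∏_{k≥0} (1 - z p^k)(1 - z⁻¹ p^{k+1})`. -/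
noncomputable def thetaP (p z : ℂ) : ℂ :=
  ∏' k : ℕ, (1 - z * p ^ k) * (1 - z⁻¹ * p ^ (k + 1))

namespace TR


lemma summable_cgeom {p : ℂ} (hp : ‖p‖ < 1) (c : ℂ) :
    Summable (fun k : ℕ => c * p ^ k) :=
  (summable_geometric_of_norm_lt_one (by simpa using hp)).mul_left c

lemma one_add_ne_zero_of_norm {u : ℂ} (h : ‖u‖ < 1) : 1 + u ≠ 0 := by
  intro h0
  have hu : u = -1 := by linear_combination h0
  rw [hu] at h; simp at h

lemma tail_facts {u : ℕ → ℂ} (hu : Summable u) :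
    ∃ N : ℕ, (∀ k : ℕ, ‖u (k + N)‖ ≤ 1/2) ∧
      Summable (fun k => Complex.log (1 + u (k + N))) := by
  obtain ⟨N, hN⟩ := Metric.tendsto_atTop.mp hu.tendsto_atTop_zero (1/2) one_half_pos
  have hsmall : ∀ k : ℕ, ‖u (k + N)‖ ≤ 1/2 := by
    intro k
    have := hN (k + N) (Nat.le_add_left _ _)
    simpa [dist_eq_norm] using this.le
  refine ⟨N, hsmall, ?_⟩
  apply Summable.of_norm_bounded (g := fun k => (3/2) * ‖u (k + N)‖)
  · exact (((summable_nat_add_iff N).2 hu.norm).mul_left _)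
  · intro k
    exact Complex.norm_log_one_add_half_le_self (hsmall k)

/-- Multipliability of `∏ (1 + u k)` for summable `u`. -/
lemma multipliable_one_add {u : ℕ → ℂ} (hu : Summable u) :
    Multipliable (fun k => 1 + u k) := by
  obtain ⟨N, hsmall, hlog⟩ := tail_facts hu
  have hne : ∀ k : ℕ, (1 : ℂ) + u (k + N) ≠ 0 := fun k =>
    one_add_ne_zero_of_norm (lt_of_le_of_lt (hsmall k) (by norm_num))
  have htail : Multipliable (fun k => 1 + u (k + N)) :=
    Complex.multipliable_of_summable_log (f := fun k => 1 + u (k + N)) hlog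
  exact Multipliable.comp_nat_add (k := N) htail

/-- Nonvanishing of `∏ (1 + u k)` when all factors are nonzero. -/
lemma tprod_one_add_ne_zero {u : ℕ → ℂ} (hu : Summable u) (h : ∀ k, (1:ℂ) + u k ≠ 0) :
    (∏' k, (1 + u k)) ≠ 0 := by
  obtain ⟨N, hsmall, hlog⟩ := tail_facts hu
  have htail : Multipliable (fun k => 1 + u (k + N)) :=
    Complex.multipliable_of_summable_log (f := fun k => 1 + u (k + N)) hlog
  have htne : (∏' k, (1 + u (k + N))) ≠ 0 := by
    have := Complex.cexp_tsum_eq_tprod (f := fun k => 1 + u (k + N)) (fun k => h _) hlog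
    rw [← this]
    exact Complex.exp_ne_zero _
  have hsplit := Multipliable.prod_mul_tprod_nat_mul' (M := ℂ) (f := fun k => 1 + u k) (k := N) htail
  rw [← hsplit]
  exact mul_ne_zero (Finset.prod_ne_zero_iff.mpr (fun k _ => h k)) htne


/-- The basic product `∏ (1 - c p^k)`. -/
noncomputable def gp (p c : ℂ) : ℂ := ∏' k : ℕ, (1 - c * p ^ k)

variable {p : ℂ}

lemma mult_gp (hp : ‖p‖ < 1) (c : ℂ) :
    Multipliable (fun k : ℕ => 1 - c * p ^ k) := by
  have he : (fun k : ℕ => 1 - c * p ^ k) = fun k => 1 + (-c) * p ^ k := by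
    funext k; ring
  rw [he]
  exact multipliable_one_add (summable_cgeom hp (-c))

lemma gp_ne_zero (hp : ‖p‖ < 1) {c : ℂ} (h : ∀ k : ℕ, 1 - c * p ^ k ≠ 0) :
    gp p c ≠ 0 := by
  have he : (fun k : ℕ => 1 - c * p ^ k) = fun k => 1 + (-c) * p ^ k := by
    funext k; ring
  rw [gp, he]
  refine tprod_one_add_ne_zero (summable_cgeom hp (-c)) (fun k => ?_)
  intro hh
  exact h k (by linear_combination hh)

lemma gp_shift (hp : ‖p‖ < 1) (c : ℂ) : gp p c = (1 - c) * gp p (c * p) := by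
  have hm : Multipliable (fun n : ℕ => 1 - c * p ^ (n + 1)) := by
    have he : (fun n : ℕ => 1 - c * p ^ (n + 1)) = fun n => 1 - (c * p) * p ^ n := by
      funext n; ring
    rw [he]; exact mult_gp hp _
  have h := tprod_eq_zero_mul' (f := fun k : ℕ => 1 - c * p ^ k) hm
  simp only [pow_zero, mul_one] at h
  rw [gp, h, gp]
  congr 1
  exact tprod_congr fun n => by ring

lemma theta_eq_gp (hp : ‖p‖ < 1) (w : ℂ) :
    thetaP p w = gp p w * gp p (w⁻¹ * p) := by
  rw [thetaP, gp, gp]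
  rw [← Multipliable.tprod_mul (mult_gp hp w) (mult_gp hp (w⁻¹ * p))]
  exact tprod_congr fun k => by ring

lemma theta_fe (hp : ‖p‖ < 1) (hp0 : p ≠ 0) {w : ℂ} (hw : w ≠ 0) :
    thetaP p (p * w) = -w⁻¹ * thetaP p w := by
  rw [theta_eq_gp hp, theta_eq_gp hp]
  have h1 : (p * w)⁻¹ * p = w⁻¹ := by field_simp
  rw [h1]
  rw [gp_shift hp w⁻¹, gp_shift hp w]
  have : gp p (p * w) = gp p (w * p) := by rw [mul_comm]
  rw [this]
  field_simp
  ring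

lemma theta_inv (hp : ‖p‖ < 1) {w : ℂ} (hw : w ≠ 0) :
    thetaP p w⁻¹ = -w⁻¹ * thetaP p w := by
  rw [theta_eq_gp hp, theta_eq_gp hp]
  rw [inv_inv, gp_shift hp w⁻¹, gp_shift hp w]
  field_simp
  ring

lemma theta_one (hp : ‖p‖ < 1) : thetaP p 1 = 0 := by
  rw [theta_eq_gp hp, gp_shift hp 1]
  simp

lemma theta_ne_zero (hp : ‖p‖ < 1) {w : ℂ}
    (h1 : ∀ k : ℕ, 1 - w * p ^ k ≠ 0) (h2 : ∀ k : ℕ, 1 - (w⁻¹ * p) * p ^ k ≠ 0) :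
    thetaP p w ≠ 0 :=
  by rw [theta_eq_gp hp]; exact mul_ne_zero (gp_ne_zero hp h1) (gp_ne_zero hp h2)


/-- `gp p` is differentiable (entire) in `c`. -/
lemma gp_differentiable (hp : ‖p‖ < 1) (c₀ : ℂ) :
    DifferentiableAt ℂ (gp p) c₀ := by
  have hq0 : (0:ℝ) ≤ ‖p‖ := norm_nonneg p
  obtain ⟨N, hN⟩ : ∃ N : ℕ, (‖c₀‖ + 1) * ‖p‖ ^ N ≤ 1/2 := by
    have h := tendsto_pow_atTop_nhds_zero_of_lt_one hq0 hp
    have h2 := (h.const_mul (‖c₀‖ + 1)).eventually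
      (eventually_le_nhds (show (‖c₀‖ + 1) * 0 < 1/2 by simp))
    simpa using h2.exists
  set U : Set ℂ := ball 0 (‖c₀‖ + 1) with hU
  have hc₀U : c₀ ∈ U := by
    simp only [hU, mem_ball, Complex.dist_eq, sub_zero]
    linarith [norm_nonneg c₀]
  have hUopen : IsOpen U := isOpen_ball
  have hUnhds : U ∈ 𝓝 c₀ := hUopen.mem_nhds hc₀U
  have hbound : ∀ (k : ℕ), ∀ c ∈ U, ‖c * p ^ (k + N)‖ ≤
      (1/2) * ‖p‖ ^ k := by
    intro k c hc
    have hcn : ‖c‖ ≤ ‖c₀‖ + 1 := by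
      have := mem_ball_iff_norm.mp hc
      simp only [sub_zero] at this
      exact this.le
    calc ‖c * p ^ (k + N)‖
        = ‖c‖ * (‖p‖ ^ k * ‖p‖ ^ N) := by
          rw [norm_mul, norm_pow, pow_add]
      _ ≤ (‖c₀‖ + 1) * (‖p‖ ^ k * ‖p‖ ^ N) :=
          mul_le_mul_of_nonneg_right hcn (by positivity)
      _ = ((‖c₀‖ + 1) * ‖p‖ ^ N) * ‖p‖ ^ k := by ring
      _ ≤ (1/2) * ‖p‖ ^ k := mul_le_mul_of_nonneg_right hN (by positivity)
  have hhalf : ∀ (k : ℕ), ∀ c ∈ U, ‖c * p ^ (k + N)‖ ≤ 1/2 := by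
    intro k c hc
    refine (hbound k c hc).trans ?_
    have : ‖p‖ ^ k ≤ 1 := pow_le_one₀ hq0 hp.le
    nlinarith
  have hne : ∀ (k : ℕ), ∀ c ∈ U, (1 - c * p ^ (k + N)) ≠ 0 := by
    intro k c hc h0
    have : ‖c * p ^ (k + N)‖ = 1 := by
      have : c * p ^ (k + N) = 1 := by linear_combination -h0
      rw [this]; simp
    linarith [hhalf k c hc]
  have hlogb : ∀ (k : ℕ), ∀ c ∈ U, ‖Complex.log (1 - c * p ^ (k + N))‖ ≤
      (3/2) * ((1/2) * ‖p‖ ^ k) := by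
    intro k c hc
    have h1 : ‖(-(c * p ^ (k + N)))‖ ≤ 1/2 := by
      rw [norm_neg]; exact hhalf k c hc
    have h2 := Complex.norm_log_one_add_half_le_self h1
    have h3 : (1 : ℂ) + -(c * p ^ (k + N)) = 1 - c * p ^ (k + N) := by ring
    rw [h3] at h2
    refine h2.trans ?_
    rw [norm_neg]
    exact mul_le_mul_of_nonneg_left (hbound k c hc) (by norm_num)
  have hlogsum : ∀ c ∈ U, Summable (fun k => Complex.log (1 - c * p ^ (k + N))) := by
    intro c hc
    apply Summable.of_norm_bounded
      (((summable_geometric_of_lt_one hq0 hp).mul_left (1/2)).mul_left (3/2))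
    exact fun k => hlogb k c hc
  set S : ℂ → ℂ := fun c => ∑' k : ℕ, Complex.log (1 - c * p ^ (k + N)) with hS
  have hSdiff : DifferentiableOn ℂ S U := by
    have htu := tendstoUniformlyOn_tsum
      (f := fun (k : ℕ) (c : ℂ) => Complex.log (1 - c * p ^ (k + N)))
      (u := fun k => (3/2) * ((1/2) * ‖p‖ ^ k))
      (((summable_geometric_of_lt_one hq0 hp).mul_left (1/2)).mul_left (3/2))
      (fun k c hc => hlogb k c hc)
    refine htu.tendstoLocallyUniformlyOn.differentiableOn (Filter.Eventually.of_forall ?_) hUopen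
    intro n
    apply DifferentiableOn.fun_sum
    intro k _
    intro c hc
    apply DifferentiableAt.differentiableWithinAt
    apply DifferentiableAt.clog (by fun_prop)
    have h3 : (1 : ℂ) - c * p ^ (k + N) = 1 + -(c * p ^ (k + N)) := by ring
    rw [h3]
    apply Complex.mem_slitPlane_of_norm_lt_one
    rw [norm_neg]
    exact lt_of_le_of_lt (hhalf k c hc) (by norm_num)
  have hsplit : ∀ c ∈ U, gp p c = (∏ i ∈ range N, (1 - c * p ^ i)) * Complex.exp (S c) := by
    intro c hc
    have htail : Multipliable (fun k : ℕ => 1 - c * p ^ (k + N)) := by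
      have he : (fun k : ℕ => 1 - c * p ^ (k + N)) = fun k => 1 - (c * p ^ N) * p ^ k := by
        funext k; rw [pow_add]; ring
      rw [he]; exact mult_gp hp _
    have h1 := Multipliable.prod_mul_tprod_nat_mul' (f := fun k : ℕ => 1 - c * p ^ k) (k := N) htail
    have h2 : (∏' i : ℕ, (1 - c * p ^ (i + N))) = Complex.exp (S c) := by
      have h3 := Complex.cexp_tsum_eq_tprod (f := fun k => 1 - c * p ^ (k + N))
        (fun k => hne k c hc) (hlogsum c hc)
      exact h3.symm
    rw [gp, ← h1, h2]
  have heq : gp p =ᶠ[𝓝 c₀] fun c => (∏ i ∈ range N, (1 - c * p ^ i)) * Complex.exp (S c) :=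
    eventually_of_mem hUnhds hsplit
  rw [heq.differentiableAt_iff]
  apply DifferentiableAt.mul
  · apply DifferentiableAt.fun_finsetProd
    intro i _
    fun_prop
  · exact (hSdiff.differentiableAt hUnhds).cexp


variable {p : ℂ}

/-- Substitution `z = p·w` in a circle integral. -/
lemma circle_scale (hp0 : p ≠ 0) (g : ℂ → ℂ) (r : ℝ) :
    (∮ z in C(0, ‖p‖ * r), g z) = ∮ z in C(0, r), (p * g (p * z)) := by
  have key : ∀ θ : ℝ, p * circleMap 0 r θ = circleMap 0 (‖p‖ * r) (θ + Complex.arg p) := by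
    intro θ
    simp only [circleMap, zero_add]
    push_cast
    rw [add_mul, Complex.exp_add]
    nth_rewrite 1 [← Complex.norm_mul_exp_arg_mul_I p]
    ring
  set s := ‖p‖ * r with hs
  set h : ℝ → ℂ := fun θ => deriv (circleMap 0 s) θ • g (circleMap 0 s θ) with hh
  have hper : Function.Periodic h (2 * π) := by
    intro θ
    simp only [hh, deriv_circleMap, periodic_circleMap 0 s θ]
  have hRHS : (∮ z in C(0, r), (p * g (p * z))) = ∫ θ in (0)..(2 * π), h (θ + Complex.arg p) := by
    rw [circleIntegral]
    congr 1
    funext θ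
    simp only [hh, deriv_circleMap, smul_eq_mul, ← key θ]
    ring
  rw [hRHS, integral_comp_add_right h (Complex.arg p)]
  have hper2 := hper.intervalIntegral_add_eq (Complex.arg p) 0
  rw [circleIntegral]
  simp only [zero_add] at hper2
  rw [show (0:ℝ) + Complex.arg p = Complex.arg p by ring,
      show 2 * π + Complex.arg p = Complex.arg p + 2 * π by ring, hper2]

/-- Radius independence of moments. -/
lemma mom_indep {f : ℂ → ℂ} (hf : ∀ z : ℂ, z ≠ 0 → DifferentiableAt ℂ f z) (n : ℤ)
    {r R : ℝ} (hr : 0 < r) (hR : 0 < R) :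
    (∮ z in C(0, r), z ^ n * f z) = ∮ z in C(0, R), z ^ n * f z := by
  have main : ∀ {a b : ℝ}, 0 < a → a ≤ b →
      (∮ z in C(0, b), z ^ n * f z) = ∮ z in C(0, a), z ^ n * f z := by
    intro a b ha hab
    apply circleIntegral_eq_of_differentiable_on_annulus_off_countable ha hab
      Set.countable_empty
    · intro z hz
      have hz0 : z ≠ 0 := by
        intro h0
        apply hz.2
        rw [h0]
        exact mem_ball_self ha
      exact (((differentiableAt_zpow.mpr (Or.inl hz0)).mul (hf z hz0)).continuousAt).continuousWithinAt
    · intro z hz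
      have hz0 : z ≠ 0 := by
        intro h0
        apply hz.1.2
        rw [h0]
        exact mem_closedBall_self ha.le
      exact (differentiableAt_zpow.mpr (Or.inl hz0)).mul (hf z hz0)
  rcases le_total r R with h | h
  · exact (main hr h).symm
  · exact main hR h

/-- The `n`-th moment of `f` along the unit circle. -/
noncomputable def mom (f : ℂ → ℂ) (n : ℤ) : ℂ := ∮ z in C(0, 1), z ^ n * f z

lemma mom_rec (hp0 : p ≠ 0) {f : ℂ → ℂ} (hf : ∀ z : ℂ, z ≠ 0 → DifferentiableAt ℂ f z)
    (hFE : ∀ z : ℂ, z ≠ 0 → f (p * z) = (p * z ^ 2)⁻¹ * f z) (n : ℤ) :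
    mom f n = p ^ n * mom f (n - 2) := by
  have habs : (0:ℝ) < ‖p‖ := norm_pos_iff.mpr hp0
  have h1 : mom f n = ∮ z in C(0, ‖p‖ * 1), z ^ n * f z := by
    rw [mom]
    exact mom_indep hf n one_pos (by simpa using habs)
  rw [h1, circle_scale hp0 (fun z => z ^ n * f z) 1]
  have h2 : Set.EqOn (fun z : ℂ => p * ((p * z) ^ n * f (p * z)))
      (fun z : ℂ => p ^ n * (z ^ (n - 2) * f z)) (sphere 0 1) := by
    intro z hz
    have hz0 : z ≠ 0 := by
      intro h0
      rw [mem_sphere_iff_norm, h0] at hz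
      simp at hz
    simp only
    rw [hFE z hz0, mul_zpow, zpow_sub₀ hz0, zpow_two]
    field_simp
  rw [circleIntegral.integral_congr one_pos.le h2, circleIntegral.integral_const_mul]
  rfl

lemma mom_all_zero (hp0 : p ≠ 0) {f : ℂ → ℂ}
    (hf : ∀ z : ℂ, z ≠ 0 → DifferentiableAt ℂ f z)
    (hFE : ∀ z : ℂ, z ≠ 0 → f (p * z) = (p * z ^ 2)⁻¹ * f z)
    (hm1 : mom f (-1) = 0) (hm2 : mom f (-2) = 0) : ∀ n : ℤ, mom f n = 0 := by
  have hrec := mom_rec hp0 hf hFE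
  have step2 : ∀ n : ℤ, mom f n = 0 → mom f (n + 2) = 0 := by
    intro n h
    have h2 := hrec (n + 2)
    rw [show n + 2 - 2 = n by ring, h, mul_zero] at h2
    exact h2
  have step2' : ∀ n : ℤ, mom f n = 0 → mom f (n - 2) = 0 := by
    intro n h
    have h2 := hrec n
    rw [h] at h2
    have hpn : (p : ℂ) ^ n ≠ 0 := zpow_ne_zero _ hp0
    exact (mul_eq_zero.mp h2.symm).resolve_left hpn
  have upA : ∀ m : ℕ, mom f (-1 + 2 * (m:ℤ)) = 0 := by
    intro m
    induction m with
    | zero => simpa using hm1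
    | succ k ih =>
      have := step2 _ ih
      rw [show (-1 + 2 * (k:ℤ)) + 2 = -1 + 2 * ((k:ℤ)+1) by ring] at this
      simpa using this
  have upB : ∀ m : ℕ, mom f (-2 + 2 * (m:ℤ)) = 0 := by
    intro m
    induction m with
    | zero => simpa using hm2
    | succ k ih =>
      have := step2 _ ih
      rw [show (-2 + 2 * (k:ℤ)) + 2 = -2 + 2 * ((k:ℤ)+1) by ring] at this
      simpa using this
  have downA : ∀ m : ℕ, mom f (-1 - 2 * (m:ℤ)) = 0 := by
    intro m
    induction m with
    | zero => simpa using hm1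
    | succ k ih =>
      have := step2' _ ih
      rw [show (-1 - 2 * (k:ℤ)) - 2 = -1 - 2 * ((k:ℤ)+1) by ring] at this
      simpa using this
  have downB : ∀ m : ℕ, mom f (-2 - 2 * (m:ℤ)) = 0 := by
    intro m
    induction m with
    | zero => simpa using hm2
    | succ k ih =>
      have := step2' _ ih
      rw [show (-2 - 2 * (k:ℤ)) - 2 = -2 - 2 * ((k:ℤ)+1) by ring] at this
      simpa using this
  intro n
  rcases Int.even_or_odd n with ⟨k, hk⟩ | ⟨k, hk⟩
  · rcases le_or_gt 0 (k + 1) with h | h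
    · have hkn : n = -2 + 2 * (((k+1).toNat : ℤ)) := by rw [Int.toNat_of_nonneg h]; omega
      rw [hkn]; exact upB _
    · have hkn : n = -2 - 2 * (((-(k+1)).toNat : ℤ)) := by
        rw [Int.toNat_of_nonneg (by omega)]; omega
      rw [hkn]; exact downB _
  · rcases le_or_gt 0 (k + 1) with h | h
    · have hkn : n = -1 + 2 * (((k+1).toNat : ℤ)) := by rw [Int.toNat_of_nonneg h]; omega
      rw [hkn]; exact upA _
    · have hkn : n = -1 - 2 * (((-(k+1)).toNat : ℤ)) := by
        rw [Int.toNat_of_nonneg (by omega)]; omega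
      rw [hkn]; exact downA _


/-- Cauchy formula difference for an annulus around 0. -/
lemma cauchy_diff {f : ℂ → ℂ} (hf : ∀ z : ℂ, z ≠ 0 → DifferentiableAt ℂ f z)
    {w : ℂ} {r R : ℝ} (hr : 0 < r) (hrw : r < ‖w‖) (hwR : ‖w‖ < R) :
    (∮ z in C(0, R), (z - w)⁻¹ * f z) - (∮ z in C(0, r), (z - w)⁻¹ * f z)
      = (2 * π * I) * f w := by
  have hw0 : w ≠ 0 := by
    intro h0
    rw [h0] at hrw
    simp only [norm_zero] at hrw
    linarith
  have hrR : r ≤ R := le_of_lt (lt_trans hrw hwR)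
  have hR0 : 0 < R := lt_trans hr (lt_of_lt_of_le hrw (le_of_lt hwR))
  set g : ℂ → ℂ := dslope f w with hg
  -- points on annulus boundary circles are nonzero and differ from w appropriately
  have hzr : ∀ z ∈ sphere (0:ℂ) r, z ≠ 0 ∧ z ≠ w := by
    intro z hz
    rw [mem_sphere_iff_norm, sub_zero] at hz
    constructor
    · intro h0; rw [h0] at hz; simp at hz; linarith
    · intro h0; rw [h0] at hz; linarith [hz ▸ hrw]
  have hzR : ∀ z ∈ sphere (0:ℂ) R, z ≠ 0 ∧ z ≠ w := by
    intro z hz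
    rw [mem_sphere_iff_norm, sub_zero] at hz
    constructor
    · intro h0; rw [h0] at hz; simp at hz; linarith
    · intro h0; rw [h0] at hz; linarith [hz ▸ hwR]
  -- step 1: the two integrals of g agree
  have step1 : (∮ z in C(0, R), g z) = ∮ z in C(0, r), g z := by
    apply circleIntegral_eq_of_differentiable_on_annulus_off_countable hr hrR
      (Set.countable_singleton w)
    · intro z hz
      have hz0 : z ≠ 0 := by
        intro h0
        apply hz.2
        rw [h0]
        exact mem_ball_self hr
      by_cases hzw : z = w
      · subst hzw
        exact (continuousAt_dslope_same.mpr (hf z hz0)).continuousWithinAt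
      · exact ((continuousAt_dslope_of_ne hzw).mpr (hf z hz0).continuousAt).continuousWithinAt
    · intro z hz
      have hz0 : z ≠ 0 := by
        intro h0
        apply hz.1.2
        rw [h0]
        exact mem_closedBall_self hr.le
      have hzw : z ≠ w := by
        intro h0
        exact hz.2 (by rw [h0]; exact rfl)
      exact (differentiableAt_dslope_of_ne hzw).mpr (hf z hz0)
  -- rewrite both integrals of g
  have hgeq : ∀ (ρ : ℝ), 0 < ρ → (∀ z ∈ sphere (0:ℂ) ρ, z ≠ 0 ∧ z ≠ w) →
      (∮ z in C(0, ρ), g z) =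
        (∮ z in C(0, ρ), (z - w)⁻¹ * f z) - (∮ z in C(0, ρ), (z - w)⁻¹) * f w := by
    intro ρ hρ hsp
    have heq : Set.EqOn g
        (fun z => (z - w)⁻¹ * f z - (z - w)⁻¹ * f w) (sphere 0 ρ) := by
      intro z hz
      have := (hsp z hz).2
      rw [hg, dslope_of_ne f this, slope_def_field]
      field_simp
    rw [circleIntegral.integral_congr hρ.le heq]
    have hint1 : CircleIntegrable (fun z => (z - w)⁻¹ * f z) 0 ρ := by
      apply ContinuousOn.circleIntegrable hρ.le
      intro z hz
      have h1 := (hsp z hz).1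
      have h2 := (hsp z hz).2
      exact (((continuousAt_id.sub continuousAt_const).inv₀ (sub_ne_zero.mpr h2)).mul
        (hf z h1).continuousAt).continuousWithinAt
    have hint2 : CircleIntegrable (fun z => (z - w)⁻¹ * f w) 0 ρ := by
      apply ContinuousOn.circleIntegrable hρ.le
      intro z hz
      have h2 := (hsp z hz).2
      exact (((continuousAt_id.sub continuousAt_const).inv₀ (sub_ne_zero.mpr h2)).mul
        continuousAt_const).continuousWithinAt
    rw [circleIntegral.integral_sub hint1 hint2]
    congr 1
    have := circleIntegral.integral_smul_const (fun z => (z - w)⁻¹) (f w) 0 ρ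
    simpa [smul_eq_mul] using this
  have houter : (∮ z in C(0, R), (z - w)⁻¹) = 2 * π * I :=
    circleIntegral.integral_sub_inv_of_mem_ball (by
      rw [mem_ball, Complex.dist_eq, sub_zero]; exact hwR)
  have hinner : (∮ z in C(0, r), (z - w)⁻¹) = 0 := by
    apply Complex.circleIntegral_eq_zero_of_differentiable_on_off_countable hr.le
      Set.countable_empty
    · intro z hz
      have hzw : z ≠ w := by
        intro h0
        subst h0
        rw [mem_closedBall, Complex.dist_eq, sub_zero] at hz
        linarith
      exact ((continuousAt_id.sub continuousAt_const).inv₀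
        (sub_ne_zero.mpr hzw)).continuousWithinAt
    · intro z hz
      have hzw : z ≠ w := by
        intro h0
        subst h0
        rw [mem_diff, mem_ball, Complex.dist_eq, sub_zero] at hz
        linarith [hz.1]
      exact (differentiableAt_id.sub_const w).inv (sub_ne_zero.mpr hzw)
  have e1 := hgeq R hR0 hzR
  have e2 := hgeq r hr hzr
  rw [e1, e2, houter, hinner] at step1
  linear_combination step1


/-- Interchange of circle integral and sum, via a Weierstrass-type bound. -/
lemma circleIntegral_tsum {G : ℕ → ℂ → ℂ} {R : ℝ} (hR : 0 < R)
    (hcont : ∀ n, ContinuousOn (G n) (sphere (0:ℂ) R))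
    {u : ℕ → ℝ} (hu : Summable u)
    (hbound : ∀ n, ∀ z ∈ sphere (0:ℂ) R, ‖G n z‖ ≤ u n) :
    (∮ z in C(0, R), (∑' n, G n z)) = ∑' n, ∮ z in C(0, R), G n z := by
  have hGc : ∀ n, Continuous (fun θ : ℝ => G n (circleMap 0 R θ)) := fun n =>
    (hcont n).comp_continuous (continuous_circleMap _ _) (fun θ => circleMap_mem_sphere _ hR.le θ)
  set F : ℕ → ℝ → ℂ := fun n θ => deriv (circleMap 0 R) θ • G n (circleMap 0 R θ) with hF
  have hFc : ∀ n, Continuous (F n) := by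
    intro n
    simp only [hF, deriv_circleMap]
    exact ((continuous_circleMap 0 R).mul continuous_const).mul (hGc n)
  have hvol : (volume (Icc (0:ℝ) (2*π))) = ENNReal.ofReal (2*π) := by
    rw [Real.volume_Icc]; norm_num
  have hFbound : ∀ n, ∀ θ : ℝ, ‖F n θ‖ ≤ R * u n := by
    intro n θ
    simp only [hF, deriv_circleMap, norm_smul]
    calc ‖circleMap 0 R θ * I‖ * ‖G n (circleMap 0 R θ)‖
        ≤ (R * 1) * u n := by
          apply mul_le_mul _ (hbound n _ (circleMap_mem_sphere _ hR.le θ)) (norm_nonneg _)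
            (by positivity)
          rw [norm_mul, norm_circleMap_zero,
            abs_of_pos hR]
          simp
      _ = R * u n := by ring
  have key : (∫ θ in Icc (0:ℝ) (2*π), ∑' n, F n θ) = ∑' n, ∫ θ in Icc (0:ℝ) (2*π), F n θ := by
    apply MeasureTheory.integral_tsum
    · exact fun n => ((hFc n).aestronglyMeasurable).restrict
    · have hb : ∀ n, (∫⁻ θ in Icc (0:ℝ) (2*π), ‖F n θ‖ₑ) ≤
          ENNReal.ofReal ((R * u n) * (2*π)) := by
        intro n
        calc (∫⁻ θ in Icc (0:ℝ) (2*π), ‖F n θ‖ₑ)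
            ≤ ∫⁻ _ in Icc (0:ℝ) (2*π), ENNReal.ofReal (R * u n) := by
              apply lintegral_mono
              intro θ
              simp only
              rw [← ofReal_norm_eq_enorm]
              exact ENNReal.ofReal_le_ofReal (hFbound n θ)
          _ = ENNReal.ofReal (R * u n) * volume (Icc (0:ℝ) (2*π)) :=
              setLIntegral_const _ _
          _ = ENNReal.ofReal ((R * u n) * (2*π)) := by
              rw [hvol, ← ENNReal.ofReal_mul]
              have : (0:ℝ) ≤ u n := le_trans (norm_nonneg _)
                (hbound n _ (circleMap_mem_sphere (0:ℂ) hR.le 0))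
              positivity
      apply ne_of_lt
      calc (∑' n, ∫⁻ θ in Icc (0:ℝ) (2*π), ‖F n θ‖ₑ)
          ≤ ∑' n, ENNReal.ofReal ((R * u n) * (2*π)) := ENNReal.tsum_le_tsum hb
        _ = ENNReal.ofReal (∑' n, (R * u n) * (2*π)) := by
            rw [← ENNReal.ofReal_tsum_of_nonneg]
            · intro n
              have : (0:ℝ) ≤ u n := le_trans (norm_nonneg _)
                (hbound n _ (circleMap_mem_sphere (0:ℂ) hR.le 0))
              positivity
            · exact ((hu.mul_left R).mul_right (2*π))
        _ < ⊤ := ENNReal.ofReal_lt_top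
  -- convert to circleIntegral statements
  rw [circleIntegral_def_Icc]
  have hpt : ∀ θ : ℝ, deriv (circleMap 0 R) θ • (∑' n, G n (circleMap 0 R θ))
      = ∑' n, F n θ := by
    intro θ
    simp only [hF, deriv_circleMap, smul_eq_mul]
    rw [tsum_mul_left]
  calc (∫ θ in Icc (0:ℝ) (2*π), deriv (circleMap 0 R) θ • (∑' n, G n (circleMap 0 R θ)))
      = ∫ θ in Icc (0:ℝ) (2*π), ∑' n, F n θ := by
        apply MeasureTheory.integral_congr_ae
        filter_upwards with θ
        exact hpt θ
    _ = ∑' n, ∫ θ in Icc (0:ℝ) (2*π), F n θ := key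
    _ = ∑' n, ∮ z in C(0, R), G n z := by
        apply tsum_congr
        intro n
        rw [circleIntegral_def_Icc]



lemma geom_aux {v z : ℂ} (h : ‖v‖ < ‖z‖) (hz : z ≠ 0) :
    ∑' n : ℕ, v ^ n * z ^ (-(n:ℤ) - 1) = (z - v)⁻¹ := by
  have hzpos : (0:ℝ) < ‖z‖ := lt_of_le_of_lt (norm_nonneg v) h
  have h1 : ∀ n : ℕ, v ^ n * z ^ (-(n:ℤ) - 1) = (v / z) ^ n * z⁻¹ := by
    intro n
    have he : (-(n:ℤ) - 1) = -((n+1 : ℕ) : ℤ) := by push_cast; ring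
    rw [he, zpow_neg, zpow_natCast, div_pow, pow_succ]
    field_simp
  rw [tsum_congr h1, tsum_mul_right, tsum_geometric_of_norm_lt_one (by
    rw [norm_div]
    exact (div_lt_one (by simpa using hzpos)).mpr (by simpa using h))]
  rw [← mul_inv]
  congr 1
  field_simp

lemma pow_inv_eq (a R : ℝ) (hR : 0 < R) (n : ℕ) :
    a ^ n * (R ^ (n+1))⁻¹ = (a / R) ^ n * R⁻¹ := by
  rw [div_pow, pow_succ]
  field_simp

/-- If all moments of `f` vanish and `f` is holomorphic on `ℂ*`, then `f = 0` on `ℂ*`. -/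
lemma vanish {f : ℂ → ℂ} (hf : ∀ z : ℂ, z ≠ 0 → DifferentiableAt ℂ f z)
    (hmom : ∀ n : ℤ, mom f n = 0) {w : ℂ} (hw : w ≠ 0) : f w = 0 := by
  set a := ‖w‖ with ha
  have ha0 : 0 < a := norm_pos_iff.mpr hw
  have hr0 : 0 < a / 2 := by positivity
  have hrw : a / 2 < a := by linarith
  have hwR : a < a + 1 := by linarith
  have hR0 : 0 < a + 1 := by positivity
  have hcf : ∀ ρ : ℝ, 0 < ρ → ∀ z ∈ sphere (0:ℂ) ρ, z ≠ 0 := by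
    intro ρ hρ z hzs h0
    rw [mem_sphere_iff_norm, h0, sub_zero] at hzs
    simp only [norm_zero] at hzs
    linarith
  have habs : ∀ {ρ : ℝ} {z : ℂ}, z ∈ sphere (0:ℂ) ρ → ‖z‖ = ρ := by
    intro ρ z hz
    rw [mem_sphere_iff_norm, sub_zero] at hz
    simpa using hz
  have hMex : ∀ ρ : ℝ, 0 < ρ → ∃ M : ℝ, 0 ≤ M ∧ ∀ z ∈ sphere (0:ℂ) ρ, ‖f z‖ ≤ M := by
    intro ρ hρ
    obtain ⟨M, hM⟩ := (isCompact_sphere (0:ℂ) ρ).exists_bound_of_continuousOn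
      (fun z hz => ((hf z (hcf ρ hρ z hz)).continuousAt).continuousWithinAt)
    exact ⟨max M 0, le_max_right _ _, fun z hz => le_trans (hM z hz) (le_max_left _ _)⟩
  -- mom at any radius
  have hmomρ : ∀ (m : ℤ) (ρ : ℝ), 0 < ρ → (∮ z in C(0, ρ), z ^ m * f z) = 0 := by
    intro m ρ hρ
    rw [mom_indep hf m hρ one_pos]
    exact hmom m
  -- outer integral vanishes
  have houter : (∮ z in C(0, a + 1), (z - w)⁻¹ * f z) = 0 := by
    obtain ⟨M, hM0, hM⟩ := hMex (a+1) hR0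
    set G : ℕ → ℂ → ℂ := fun n z => w ^ n * (z ^ (-(n:ℤ) - 1) * f z) with hG
    have hcont : ∀ n, ContinuousOn (G n) (sphere (0:ℂ) (a+1)) := by
      intro n z hz
      have hz0 := hcf _ hR0 z hz
      exact (continuousAt_const.mul ((continuousAt_zpow₀ _ _ (Or.inl hz0)).mul
        (hf z hz0).continuousAt)).continuousWithinAt
    have hq1 : a / (a+1) < 1 := (div_lt_one hR0).mpr hwR
    have hq0 : 0 ≤ a / (a+1) := by positivity
    have hu : Summable (fun n : ℕ => (M * (a+1)⁻¹) * (a / (a+1)) ^ n) :=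
      (summable_geometric_of_lt_one hq0 hq1).mul_left _
    have hbound : ∀ n, ∀ z ∈ sphere (0:ℂ) (a+1),
        ‖G n z‖ ≤ (M * (a+1)⁻¹) * (a / (a+1)) ^ n := by
      intro n z hz
      have hzn : ‖z‖ = a + 1 := habs hz
      have he : (-(n:ℤ) - 1) = -((n+1 : ℕ) : ℤ) := by push_cast; ring
      have hnorm : ‖G n z‖ = a ^ n * ((a+1) ^ (n+1))⁻¹ * ‖f z‖ := by
        rw [hG]
        simp only [norm_mul, norm_pow, norm_zpow]
        rw [← ha, hzn, he, zpow_neg, zpow_natCast]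
        ring
      rw [hnorm, pow_inv_eq a (a+1) hR0 n]
      calc (a / (a+1)) ^ n * (a+1)⁻¹ * ‖f z‖
          ≤ (a / (a+1)) ^ n * (a+1)⁻¹ * M := by
            apply mul_le_mul_of_nonneg_left (hM z hz) (by positivity)
        _ = (M * (a+1)⁻¹) * (a / (a+1)) ^ n := by ring
    have hEq : Set.EqOn (fun z : ℂ => (z - w)⁻¹ * f z) (fun z => ∑' n, G n z)
        (sphere (0:ℂ) (a+1)) := by
      intro z hz
      have hz0 := hcf _ hR0 z hz
      have hzn : ‖z‖ = a + 1 := habs hz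
      have h2 : ∀ n : ℕ, G n z = (w ^ n * z ^ (-(n:ℤ) - 1)) * f z := by
        intro n; rw [hG]; ring
      simp only
      rw [tsum_congr h2, tsum_mul_right, geom_aux (by rw [hzn, ← ha]; exact hwR) hz0]
    rw [circleIntegral.integral_congr hR0.le hEq, circleIntegral_tsum hR0 hcont hu hbound]
    have hzero : ∀ n : ℕ, (∮ z in C(0, a+1), G n z) = 0 := by
      intro n
      rw [hG]
      simp only
      rw [circleIntegral.integral_const_mul, hmomρ _ _ hR0, mul_zero]
    rw [tsum_congr hzero, tsum_zero]
  -- inner integral vanishes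
  have hinner : (∮ z in C(0, a/2), (z - w)⁻¹ * f z) = 0 := by
    obtain ⟨M, hM0, hM⟩ := hMex (a/2) hr0
    set G : ℕ → ℂ → ℂ := fun n z => w ^ (-(n:ℤ) - 1) * (z ^ (n:ℤ) * f z) with hG
    have hcont : ∀ n, ContinuousOn (G n) (sphere (0:ℂ) (a/2)) := by
      intro n z hz
      have hz0 := hcf _ hr0 z hz
      exact (continuousAt_const.mul ((continuousAt_zpow₀ _ _ (Or.inl hz0)).mul
        (hf z hz0).continuousAt)).continuousWithinAt
    have hq1 : (a/2) / a < 1 := by rw [div_lt_one ha0]; linarith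
    have hq0 : 0 ≤ (a/2) / a := by positivity
    have hu : Summable (fun n : ℕ => (M * a⁻¹) * ((a/2) / a) ^ n) :=
      (summable_geometric_of_lt_one hq0 hq1).mul_left _
    have hbound : ∀ n, ∀ z ∈ sphere (0:ℂ) (a/2),
        ‖G n z‖ ≤ (M * a⁻¹) * ((a/2) / a) ^ n := by
      intro n z hz
      have hzn : ‖z‖ = a/2 := habs hz
      have he : (-(n:ℤ) - 1) = -((n+1 : ℕ) : ℤ) := by push_cast; ring
      have hnorm : ‖G n z‖ = (a/2) ^ n * (a ^ (n+1))⁻¹ * ‖f z‖ := by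
        rw [hG]
        simp only [norm_mul, norm_zpow]
        rw [← ha, hzn, he, zpow_neg, zpow_natCast,
          zpow_natCast]
        ring
      rw [hnorm, pow_inv_eq (a/2) a ha0 n]
      calc ((a/2) / a) ^ n * a⁻¹ * ‖f z‖
          ≤ ((a/2) / a) ^ n * a⁻¹ * M := by
            apply mul_le_mul_of_nonneg_left (hM z hz) (by positivity)
        _ = (M * a⁻¹) * ((a/2) / a) ^ n := by ring
    have hEq : Set.EqOn (fun z : ℂ => (z - w)⁻¹ * f z) (fun z => (-1 : ℂ) * ∑' n, G n z)
        (sphere (0:ℂ) (a/2)) := by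
      intro z hz
      have hz0 := hcf _ hr0 z hz
      have hzn : ‖z‖ = a/2 := habs hz
      have h2 : ∀ n : ℕ, G n z = (z ^ n * w ^ (-(n:ℤ) - 1)) * f z := by
        intro n; simp only [hG]; rw [zpow_natCast]; ring
      simp only
      rw [tsum_congr h2, tsum_mul_right, geom_aux (by rw [hzn]; linarith) hw]
      rw [show z - w = -(w - z) by ring, inv_neg]
      ring
    rw [circleIntegral.integral_congr hr0.le hEq, circleIntegral.integral_const_mul]
    have hsum0 : (∮ z in C(0, a/2), (∑' n, G n z)) = 0 := by
      rw [circleIntegral_tsum hr0 hcont hu hbound]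
      have hzero : ∀ n : ℕ, (∮ z in C(0, a/2), G n z) = 0 := by
        intro n
        rw [hG]
        simp only
        rw [circleIntegral.integral_const_mul, hmomρ _ _ hr0, mul_zero]
      rw [tsum_congr hzero, tsum_zero]
    rw [hsum0, mul_zero]
  have hcd := cauchy_diff hf hr0 hrw hwR
  rw [houter, hinner, sub_zero] at hcd
  have := hcd.symm
  rcases mul_eq_zero.mp this with h | h
  · exact absurd h Complex.two_pi_I_ne_zero
  · exact h



/-- Differentiability of `thetaP p` away from 0. -/
lemma theta_diff (hp : ‖p‖ < 1) {w : ℂ} (hw : w ≠ 0) :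
    DifferentiableAt ℂ (thetaP p) w := by
  have he : thetaP p = fun w => gp p w * gp p (w⁻¹ * p) := funext (theta_eq_gp hp)
  rw [he]
  apply (gp_differentiable hp w).mul
  exact (gp_differentiable hp (w⁻¹ * p)).comp w ((differentiableAt_inv hw).mul_const p)

/-- The function `z ↦ θ(az)θ(a/z)`. -/
lemma fa_diff (hp : ‖p‖ < 1) {t : ℂ} (ht : t ≠ 0) {z : ℂ} (hz : z ≠ 0) :
    DifferentiableAt ℂ (fun z => thetaP p (t * z) * thetaP p (t / z)) z := by
  apply DifferentiableAt.mul
  · exact (theta_diff hp (mul_ne_zero ht hz)).comp z ((differentiableAt_const t).mul differentiableAt_id)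
  · exact (theta_diff hp (div_ne_zero ht hz)).comp z ((differentiableAt_const t).div differentiableAt_id hz)

lemma fa_fe (hp : ‖p‖ < 1) (hp0 : p ≠ 0) {t : ℂ} (ht : t ≠ 0) {z : ℂ} (hz : z ≠ 0) :
    thetaP p (t * (p * z)) * thetaP p (t / (p * z))
      = (p * z ^ 2)⁻¹ * (thetaP p (t * z) * thetaP p (t / z)) := by
  have hpz : p * z ≠ 0 := mul_ne_zero hp0 hz
  have hval : t / (p * z) ≠ 0 := div_ne_zero ht hpz
  have h1 := theta_fe hp hp0 (w := t / (p * z)) hval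
  rw [show p * (t / (p * z)) = t / z by field_simp] at h1
  rw [show t * (p * z) = p * (t * z) by ring, theta_fe hp hp0 (mul_ne_zero ht hz), h1]
  field_simp

lemma circleIntegral_add {f g : ℂ → ℂ} {c : ℂ} {R : ℝ} (hf : CircleIntegrable f c R)
    (hg : CircleIntegrable g c R) :
    (∮ z in C(c, R), (f z + g z)) = (∮ z in C(c, R), f z) + ∮ z in C(c, R), g z := by
  simp only [circleIntegral, smul_add, intervalIntegral.integral_add hf.out hg.out]

lemma momCI {F : ℂ → ℂ} (hF : ∀ z : ℂ, z ≠ 0 → DifferentiableAt ℂ F z) (n : ℤ) :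
    CircleIntegrable (fun z => z ^ n * F z) 0 1 := by
  apply ContinuousOn.circleIntegrable one_pos.le
  intro z hz
  have hz0 : z ≠ 0 := by
    intro h0
    rw [mem_sphere_iff_norm, h0, sub_zero] at hz
    simp at hz
  exact ((continuousAt_zpow₀ _ _ (Or.inl hz0)).mul (hF z hz0).continuousAt).continuousWithinAt

lemma mom_cmul {F : ℂ → ℂ} (c : ℂ) (n : ℤ) :
    mom (fun z => c * F z) n = c * mom F n := by
  rw [mom, mom, ← circleIntegral.integral_const_mul]
  congr 1
  funext z
  ring

lemma mom_lin {F G H : ℂ → ℂ} (hF : ∀ z : ℂ, z ≠ 0 → DifferentiableAt ℂ F z)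
    (hG : ∀ z : ℂ, z ≠ 0 → DifferentiableAt ℂ G z)
    (hH : ∀ z : ℂ, z ≠ 0 → DifferentiableAt ℂ H z) (b c : ℂ) (n : ℤ) :
    mom (fun z => F z + b * G z + c * H z) n = mom F n + b * mom G n + c * mom H n := by
  have hbG : ∀ z : ℂ, z ≠ 0 → DifferentiableAt ℂ (fun z => b * G z) z := fun z hz =>
    (differentiableAt_const b).mul (hG z hz)
  have hcH : ∀ z : ℂ, z ≠ 0 → DifferentiableAt ℂ (fun z => c * H z) z := fun z hz =>
    (differentiableAt_const c).mul (hH z hz)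
  have e1 : mom (fun z => F z + b * G z + c * H z) n
      = mom (fun z => F z + b * G z) n + mom (fun z => c * H z) n := by
    rw [mom, mom, mom]
    rw [show (fun z : ℂ => z ^ n * (F z + b * G z + c * H z))
        = fun z => (z ^ n * (F z + b * G z)) + (z ^ n * (c * H z)) by funext z; ring]
    have h1 : CircleIntegrable (fun z : ℂ => z ^ n * (F z + b * G z)) 0 1 :=
      momCI (fun z hz => (hF z hz).add (hbG z hz)) n
    have h2 : CircleIntegrable (fun z : ℂ => z ^ n * (c * H z)) 0 1 := momCI hcH n
    exact circleIntegral_add h1 h2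
  have e2 : mom (fun z => F z + b * G z) n = mom F n + mom (fun z => b * G z) n := by
    rw [mom, mom, mom]
    rw [show (fun z : ℂ => z ^ n * (F z + b * G z))
        = fun z => (z ^ n * F z) + (z ^ n * (b * G z)) by funext z; ring]
    exact circleIntegral_add (momCI hF n) (momCI hbG n)
  rw [e1, e2, mom_cmul, mom_cmul]

/-- The core 2-dimensionality argument. -/
lemma core (hp0 : p ≠ 0) {f1 f2 g : ℂ → ℂ}
    (hd1 : ∀ z : ℂ, z ≠ 0 → DifferentiableAt ℂ f1 z)
    (hd2 : ∀ z : ℂ, z ≠ 0 → DifferentiableAt ℂ f2 z)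
    (hdg : ∀ z : ℂ, z ≠ 0 → DifferentiableAt ℂ g z)
    (hfe1 : ∀ z : ℂ, z ≠ 0 → f1 (p * z) = (p * z ^ 2)⁻¹ * f1 z)
    (hfe2 : ∀ z : ℂ, z ≠ 0 → f2 (p * z) = (p * z ^ 2)⁻¹ * f2 z)
    (hfeg : ∀ z : ℂ, z ≠ 0 → g (p * z) = (p * z ^ 2)⁻¹ * g z)
    {t1 t2 : ℂ} (ht1 : t1 ≠ 0) (ht2 : t2 ≠ 0)
    (hg1 : g t1 = 0) (hg2 : g t2 = 0) (h11 : f1 t1 = 0) (h22 : f2 t2 = 0)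
    (h12 : f1 t2 ≠ 0) (h21 : f2 t1 ≠ 0) :
    ∀ z : ℂ, z ≠ 0 → g z = 0 := by
  set u1 := mom f1 (-1) with hu1d
  set v1 := mom f1 (-2) with hv1d
  set u2 := mom f2 (-1) with hu2d
  set v2 := mom f2 (-2) with hv2d
  set ug := mom g (-1) with hugd
  set vg := mom g (-2) with hvgd
  by_cases hdet : u1 * v2 - v1 * u2 = 0
  · -- degenerate case: derive a contradiction
    exfalso
    by_cases h10 : u1 = 0 ∧ v1 = 0
    · have hall := mom_all_zero hp0 hd1 hfe1 h10.1 h10.2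
      exact h12 (vanish hd1 hall ht2)
    · -- (u1, v1) ≠ (0,0): f2 = κ f1
      obtain ⟨κ, hku, hkv⟩ : ∃ κ : ℂ, u2 = κ * u1 ∧ v2 = κ * v1 := by
        by_cases hu1 : u1 ≠ 0
        · refine ⟨u2 / u1, by field_simp, ?_⟩
          field_simp
          linear_combination hdet
        · push_neg at hu1
          have hv1 : v1 ≠ 0 := by
            intro h0
            exact h10 ⟨hu1, h0⟩
          refine ⟨v2 / v1, ?_, by field_simp⟩
          rw [hu1, mul_zero]
          have : v1 * u2 = 0 := by linear_combination -hdet + v2 * hu1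
          exact (mul_eq_zero.mp this).resolve_left hv1
      set L : ℂ → ℂ := fun z => f2 z + (-κ) * f1 z + 0 * f1 z with hL
      have hdL : ∀ z : ℂ, z ≠ 0 → DifferentiableAt ℂ L z := fun z hz =>
        ((hd2 z hz).add ((differentiableAt_const _).mul (hd1 z hz))).add
          ((differentiableAt_const _).mul (hd1 z hz))
      have hfeL : ∀ z : ℂ, z ≠ 0 → L (p * z) = (p * z ^ 2)⁻¹ * L z := by
        intro z hz
        simp only [hL]
        rw [hfe1 z hz, hfe2 z hz]
        ring
      have hm1 : mom L (-1) = 0 := by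
        rw [hL, mom_lin hd2 hd1 hd1, ← hu2d, ← hu1d, hku]
        ring
      have hm2 : mom L (-2) = 0 := by
        rw [hL, mom_lin hd2 hd1 hd1, ← hv2d, ← hv1d, hkv]
        ring
      have hLz := vanish hdL (mom_all_zero hp0 hdL hfeL hm1 hm2) ht1
      simp only [hL] at hLz
      rw [h11] at hLz
      apply h21
      linear_combination hLz
  · -- nondegenerate case
    set μ := (ug * v2 - vg * u2) / (u1 * v2 - v1 * u2) with hμ
    set ν := (u1 * vg - v1 * ug) / (u1 * v2 - v1 * u2) with hν
    set L : ℂ → ℂ := fun z => g z + (-μ) * f1 z + (-ν) * f2 z with hL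
    have hdL : ∀ z : ℂ, z ≠ 0 → DifferentiableAt ℂ L z := fun z hz =>
      ((hdg z hz).add ((differentiableAt_const _).mul (hd1 z hz))).add
        ((differentiableAt_const _).mul (hd2 z hz))
    have hfeL : ∀ z : ℂ, z ≠ 0 → L (p * z) = (p * z ^ 2)⁻¹ * L z := by
      intro z hz
      simp only [hL]
      rw [hfe1 z hz, hfe2 z hz, hfeg z hz]
      ring
    have hm1 : mom L (-1) = 0 := by
      rw [hL, mom_lin hdg hd1 hd2, ← hugd, ← hu1d, ← hu2d, hμ, hν]
      have hD : v2 * u1 - u2 * v1 ≠ 0 := fun h => hdet (by linear_combination h)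
      field_simp
      ring
    have hm2 : mom L (-2) = 0 := by
      rw [hL, mom_lin hdg hd1 hd2, ← hvgd, ← hv1d, ← hv2d, hμ, hν]
      have hD : v2 * u1 - u2 * v1 ≠ 0 := fun h => hdet (by linear_combination h)
      field_simp
      ring
    have hLzero : ∀ w : ℂ, w ≠ 0 → L w = 0 := fun w hw =>
      vanish hdL (mom_all_zero hp0 hdL hfeL hm1 hm2) hw
    have hLt1 := hLzero t1 ht1
    have hLt2 := hLzero t2 ht2
    simp only [hL] at hLt1 hLt2
    rw [hg1, h11] at hLt1
    rw [hg2, h22] at hLt2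
    have hν0 : ν = 0 := by
      have : ν * f2 t1 = 0 := by linear_combination -hLt1
      exact (mul_eq_zero.mp this).resolve_right h21
    have hμ0 : μ = 0 := by
      have : μ * f1 t2 = 0 := by linear_combination -hLt2
      exact (mul_eq_zero.mp this).resolve_right h12
    intro z hz
    have := hLzero z hz
    simp only [hL, hν0, hμ0] at this
    linear_combination this


/-- Nonvanishing of θ off the lattice `p^ℤ`. -/
lemma theta_ne_zero_of (hp : ‖p‖ < 1) (hp0 : p ≠ 0) {w : ℂ} (hw : w ≠ 0)
    (hnot : ∀ m : ℤ, w ≠ p ^ m) : thetaP p w ≠ 0 := by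
  apply theta_ne_zero hp
  · intro k h0
    apply hnot (-(k:ℤ))
    have h1 : w * p ^ k = 1 := by linear_combination -h0
    rw [zpow_neg, zpow_natCast]
    exact eq_inv_of_mul_eq_one_left h1
  · intro k h0
    apply hnot ((k:ℤ) + 1)
    have h1 : w⁻¹ * p ^ (k+1) = 1 := by rw [pow_succ]; linear_combination -h0
    rw [show ((k:ℤ) + 1) = ((k + 1 : ℕ) : ℤ) by push_cast; ring, zpow_natCast]
    exact inv_injective (eq_inv_of_mul_eq_one_left h1)

/-- The main identity, under a genericity hypothesis on `t₂` relative to `t₁`. -/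
lemma main_generic (hp : ‖p‖ < 1) (hp0 : p ≠ 0) {t₁ t₂ t₃ z : ℂ}
    (h1 : t₁ ≠ 0) (h2 : t₂ ≠ 0) (h3 : t₃ ≠ 0) (hz : z ≠ 0)
    (hgen1 : thetaP p (t₁ * t₂) ≠ 0) (hgen2 : thetaP p (t₁ / t₂) ≠ 0) :
    t₃ * (thetaP p (t₂ * t₃) * thetaP p (t₂ / t₃)) *
        (thetaP p (t₁ * z) * thetaP p (t₁ / z)) +
      t₁ * (thetaP p (t₃ * t₁) * thetaP p (t₃ / t₁)) *
        (thetaP p (t₂ * z) * thetaP p (t₂ / z)) +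
      t₂ * (thetaP p (t₁ * t₂) * thetaP p (t₁ / t₂)) *
        (thetaP p (t₃ * z) * thetaP p (t₃ / z)) = 0 := by
  set c1 : ℂ := t₃ * (thetaP p (t₂ * t₃) * thetaP p (t₂ / t₃)) with hc1
  set c2 : ℂ := t₁ * (thetaP p (t₃ * t₁) * thetaP p (t₃ / t₁)) with hc2
  set c3 : ℂ := t₂ * (thetaP p (t₁ * t₂) * thetaP p (t₁ / t₂)) with hc3
  set f1 : ℂ → ℂ := fun z => thetaP p (t₁ * z) * thetaP p (t₁ / z) with hf1
  set f2 : ℂ → ℂ := fun z => thetaP p (t₂ * z) * thetaP p (t₂ / z) with hf2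
  set f3 : ℂ → ℂ := fun z => thetaP p (t₃ * z) * thetaP p (t₃ / z) with hf3
  set g : ℂ → ℂ := fun w => c1 * f1 w + c2 * f2 w + c3 * f3 w with hg
  have hd1 : ∀ w : ℂ, w ≠ 0 → DifferentiableAt ℂ f1 w := fun w hw => fa_diff hp h1 hw
  have hd2 : ∀ w : ℂ, w ≠ 0 → DifferentiableAt ℂ f2 w := fun w hw => fa_diff hp h2 hw
  have hd3 : ∀ w : ℂ, w ≠ 0 → DifferentiableAt ℂ f3 w := fun w hw => fa_diff hp h3 hw
  have hdg : ∀ w : ℂ, w ≠ 0 → DifferentiableAt ℂ g w := fun w hw =>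
    (((differentiableAt_const c1).mul (hd1 w hw)).add
      ((differentiableAt_const c2).mul (hd2 w hw))).add
      ((differentiableAt_const c3).mul (hd3 w hw))
  have hfe1 : ∀ w : ℂ, w ≠ 0 → f1 (p * w) = (p * w ^ 2)⁻¹ * f1 w := fun w hw =>
    fa_fe hp hp0 h1 hw
  have hfe2 : ∀ w : ℂ, w ≠ 0 → f2 (p * w) = (p * w ^ 2)⁻¹ * f2 w := fun w hw =>
    fa_fe hp hp0 h2 hw
  have hfe3 : ∀ w : ℂ, w ≠ 0 → f3 (p * w) = (p * w ^ 2)⁻¹ * f3 w := fun w hw =>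
    fa_fe hp hp0 h3 hw
  have hfeg : ∀ w : ℂ, w ≠ 0 → g (p * w) = (p * w ^ 2)⁻¹ * g w := by
    intro w hw
    simp only [hg]
    rw [hfe1 w hw, hfe2 w hw, hfe3 w hw]
    ring
  have e21 : thetaP p (t₂ / t₁) = -(t₁ / t₂)⁻¹ * thetaP p (t₁ / t₂) := by
    rw [← inv_div t₁ t₂, theta_inv hp (div_ne_zero h1 h2)]
  have e23 : thetaP p (t₂ / t₃) = -(t₃ / t₂)⁻¹ * thetaP p (t₃ / t₂) := by
    rw [← inv_div t₃ t₂, theta_inv hp (div_ne_zero h3 h2)]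
  have h11 : f1 t₁ = 0 := by
    simp only [hf1]
    rw [div_self h1, theta_one hp, mul_zero]
  have h22 : f2 t₂ = 0 := by
    simp only [hf2]
    rw [div_self h2, theta_one hp, mul_zero]
  have h12 : f1 t₂ ≠ 0 := by
    simp only [hf1]
    exact mul_ne_zero hgen1 hgen2
  have h21 : f2 t₁ ≠ 0 := by
    simp only [hf2]
    rw [mul_comm t₂ t₁, e21]
    apply mul_ne_zero hgen1
    exact mul_ne_zero (neg_ne_zero.mpr (inv_ne_zero (div_ne_zero h1 h2))) hgen2
  have hg1 : g t₁ = 0 := by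
    simp only [hg, hf1, hf2, hf3, hc1, hc2, hc3]
    rw [div_self h1, theta_one hp, mul_comm t₂ t₁, e21, inv_div]
    field_simp
    ring
  have hg2 : g t₂ = 0 := by
    simp only [hg, hf1, hf2, hf3, hc1, hc2, hc3]
    rw [div_self h2, theta_one hp, mul_comm t₂ t₃, e23, inv_div]
    field_simp
    ring
  have hcore := core hp0 hd1 hd2 hdg hfe1 hfe2 hfeg h1 h2 hg1 hg2 h11 h22 h12 h21 z hz
  simp only [hg, hf1, hf2, hf3] at hcore
  linear_combination hcore


end TR

open TR in
/-- Riemann addition formula for theta functions: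
`t₃ θ_p(t₂t₃^{±1}) θ_p(t₁z^{±1}) + t₁ θ_p(t₃t₁^{±1}) θ_p(t₂z^{±1})
  + t₂ θ_p(t₁t₂^{±1}) θ_p(t₃z^{±1}) = 0`. -/
theorem theta_addition (p t₁ t₂ t₃ z : ℂ) (hp0 : p ≠ 0) (hp : ‖p‖ < 1)
    (h1 : t₁ ≠ 0) (h2 : t₂ ≠ 0) (h3 : t₃ ≠ 0) (hz : z ≠ 0) :
    t₃ * (thetaP p (t₂ * t₃) * thetaP p (t₂ / t₃)) *
        (thetaP p (t₁ * z) * thetaP p (t₁ / z)) +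
      t₁ * (thetaP p (t₃ * t₁) * thetaP p (t₃ / t₁)) *
        (thetaP p (t₂ * z) * thetaP p (t₂ / z)) +
      t₂ * (thetaP p (t₁ * t₂) * thetaP p (t₁ / t₂)) *
        (thetaP p (t₃ * z) * thetaP p (t₃ / z)) = 0 := by
  classical
  set Φ : ℂ → ℂ := fun u =>
    t₃ * (thetaP p (u * t₃) * thetaP p (u / t₃)) * (thetaP p (t₁ * z) * thetaP p (t₁ / z)) +
    t₁ * (thetaP p (t₃ * t₁) * thetaP p (t₃ / t₁)) * (thetaP p (u * z) * thetaP p (u / z)) +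
    u * (thetaP p (t₁ * u) * thetaP p (t₁ / u)) * (thetaP p (t₃ * z) * thetaP p (t₃ / z))
    with hΦ
  set Bad : Set ℂ := ({0} ∪ Set.range fun m : ℤ => p ^ m / t₁) ∪
    (Set.range fun m : ℤ => t₁ / p ^ m) with hBad
  have hcnt : Bad.Countable :=
    (((Set.countable_singleton 0).union (Set.countable_range _)).union (Set.countable_range _))
  have hgood : ∀ u : ℂ, u ∉ Bad → Φ u = 0 := by
    intro u hu
    simp only [hBad, Set.mem_union, Set.mem_singleton_iff, Set.mem_range, not_or,
      not_exists] at hu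
    obtain ⟨⟨hu0, hr1⟩, hr2⟩ := hu
    have hg1 : thetaP p (t₁ * u) ≠ 0 := by
      apply theta_ne_zero_of hp hp0 (mul_ne_zero h1 hu0)
      intro m hm
      apply hr1 m
      rw [← hm]
      field_simp
    have hg2 : thetaP p (t₁ / u) ≠ 0 := by
      apply theta_ne_zero_of hp hp0 (div_ne_zero h1 hu0)
      intro m hm
      apply hr2 m
      rw [← hm]
      field_simp
    exact main_generic hp hp0 h1 hu0 h3 hz hg1 hg2
  have hdense : Dense Badᶜ := hcnt.dense_compl ℂ
  have hΘc : ∀ {w : ℂ}, w ≠ 0 → ContinuousAt (thetaP p) w := fun hw =>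
    (theta_diff hp hw).continuousAt
  have hin1 : ContinuousAt (fun u : ℂ => u * t₃) t₂ := by fun_prop
  have hin2 : ContinuousAt (fun u : ℂ => u / t₃) t₂ := by
    simp only [div_eq_mul_inv]; fun_prop
  have hin3 : ContinuousAt (fun u : ℂ => u * z) t₂ := by fun_prop
  have hin4 : ContinuousAt (fun u : ℂ => u / z) t₂ := by
    simp only [div_eq_mul_inv]; fun_prop
  have hin5 : ContinuousAt (fun u : ℂ => t₁ * u) t₂ := by fun_prop
  have hin6 : ContinuousAt (fun u : ℂ => t₁ / u) t₂ := by
    exact continuousAt_const.div continuousAt_id h2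
  have A1 : ContinuousAt (fun u : ℂ => thetaP p (u * t₃)) t₂ :=
    ContinuousAt.comp (x := t₂) (g := thetaP p) (hΘc (mul_ne_zero h2 h3)) hin1
  have A2 : ContinuousAt (fun u : ℂ => thetaP p (u / t₃)) t₂ :=
    ContinuousAt.comp (x := t₂) (g := thetaP p) (hΘc (div_ne_zero h2 h3)) hin2
  have A3 : ContinuousAt (fun u : ℂ => thetaP p (u * z)) t₂ :=
    ContinuousAt.comp (x := t₂) (g := thetaP p) (hΘc (mul_ne_zero h2 hz)) hin3
  have A4 : ContinuousAt (fun u : ℂ => thetaP p (u / z)) t₂ :=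
    ContinuousAt.comp (x := t₂) (g := thetaP p) (hΘc (div_ne_zero h2 hz)) hin4
  have A5 : ContinuousAt (fun u : ℂ => thetaP p (t₁ * u)) t₂ :=
    ContinuousAt.comp (x := t₂) (g := thetaP p) (hΘc (mul_ne_zero h1 h2)) hin5
  have A6 : ContinuousAt (fun u : ℂ => thetaP p (t₁ / u)) t₂ :=
    ContinuousAt.comp (x := t₂) (g := thetaP p) (hΘc (div_ne_zero h1 h2)) hin6
  have hcont : ContinuousAt Φ t₂ := by
    apply ContinuousAt.add
    apply ContinuousAt.add
    · exact (continuousAt_const.mul (A1.mul A2)).mul continuousAt_const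
    · exact continuousAt_const.mul (A3.mul A4)
    · exact (continuousAt_id.mul (A5.mul A6)).mul continuousAt_const
  have hnb : (𝓝[Badᶜ] t₂).NeBot := mem_closure_iff_nhdsWithin_neBot.mp (hdense t₂)
  have hA : Tendsto Φ (𝓝[Badᶜ] t₂) (𝓝 (Φ t₂)) := hcont.continuousWithinAt
  have hB : Tendsto Φ (𝓝[Badᶜ] t₂) (𝓝 0) := by
    refine Tendsto.congr' ?_ tendsto_const_nhds
    filter_upwards [self_mem_nhdsWithin] with u hu
    exact (hgood u hu).symm
  exact tendsto_nhds_unique hA hB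
end

section
/- Heine (Andréief) identity: for measurable functions φ₁,…,φ_n and ψ₁,…,ψ_n on a measure space (X, μ) such that all products φ_i ψ_j are integrable, (1/n!) ∫_{X^n} det_{1≤i,j≤n}(φ_i(z_j)) · det_{1≤i,j≤n}(ψ_i(z_j)) dμ(z₁)⋯dμ(z_n) = det_{1≤i,j≤n} ( ∫_X φ_i(z) ψ_j(z) dμ(z) ). -/
open MeasureTheory Finset Equiv

/-- The Heine (Andréief) identity. -/
theorem heine_identity {X : Type*} [MeasurableSpace X] (μ : Measure X) [SigmaFinite μ]
    (n : ℕ) (φ ψ : Fin n → X → ℂ)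
    (hφ : ∀ i, Measurable (φ i)) (hψ : ∀ i, Measurable (ψ i))
    (hint : ∀ i j, Integrable (fun x => φ i x * ψ j x) μ) :
    ((Nat.factorial n : ℂ))⁻¹ *
        ∫ w : Fin n → X,
          (Matrix.det (Matrix.of fun i j => φ i (w j))) *
            (Matrix.det (Matrix.of fun i j => ψ i (w j)))
          ∂(Measure.pi fun _ : Fin n => μ) =
      Matrix.det (Matrix.of fun i j => ∫ x, φ i x * ψ j x ∂μ) := by
  letI : MeasureSpace X := ⟨μ⟩
  set M : Matrix (Fin n) (Fin n) ℂ := Matrix.of fun i j => ∫ x, φ i x * ψ j x ∂μ with hM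
  have hvol : (Measure.pi fun _ : Fin n => μ) = (volume : Measure (Fin n → X)) := rfl
  -- pointwise expansion of the product of determinants
  have hpt : ∀ w : Fin n → X,
      (Matrix.det (Matrix.of fun i j => φ i (w j))) *
        (Matrix.det (Matrix.of fun i j => ψ i (w j)))
      = ∑ p : Perm (Fin n) × Perm (Fin n),
          ((((Perm.sign p.1 : ℤ) : ℂ) * ((Perm.sign p.2 : ℤ) : ℂ)) *
            ∏ j, (φ (p.1 j) (w j) * ψ (p.2 j) (w j))) := by
    intro w
    rw [Matrix.det_apply', Matrix.det_apply', Finset.sum_mul_sum, Fintype.sum_prod_type]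
    refine Finset.sum_congr rfl fun σ _ => Finset.sum_congr rfl fun τ _ => ?_
    simp only [Matrix.of_apply]
    rw [Finset.prod_mul_distrib]
    ring
  -- integrability of each summand
  have hintp : ∀ p : Perm (Fin n) × Perm (Fin n),
      Integrable (fun w : Fin n → X =>
        ((((Perm.sign p.1 : ℤ) : ℂ) * ((Perm.sign p.2 : ℤ) : ℂ)) *
          ∏ j, (φ (p.1 j) (w j) * ψ (p.2 j) (w j)))) (volume : Measure (Fin n → X)) := by
    intro p
    exact (Integrable.fintype_prod
      (f := fun j x => φ (p.1 j) x * ψ (p.2 j) x) (fun j => hint (p.1 j) (p.2 j))).const_mul _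
  -- compute the big integral
  have key : (∫ w : Fin n → X,
      (Matrix.det (Matrix.of fun i j => φ i (w j))) *
        (Matrix.det (Matrix.of fun i j => ψ i (w j)))
      ∂(Measure.pi fun _ : Fin n => μ))
      = ∑ σ : Perm (Fin n), ∑ τ : Perm (Fin n),
          (((Perm.sign σ : ℤ) : ℂ) * ((Perm.sign τ : ℤ) : ℂ)) * ∏ j, M (σ j) (τ j) := by
    rw [hvol]
    simp_rw [hpt]
    rw [integral_finset_sum _ (fun p _ => hintp p), Fintype.sum_prod_type]
    refine Finset.sum_congr rfl fun σ _ => Finset.sum_congr rfl fun τ _ => ?_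
    rw [integral_const_mul, ← hvol,
      integral_fintype_prod_eq_prod (ι := Fin n) (fun j x => φ (σ j) x * ψ (τ j) x)]
    rfl
  -- the inner sum over τ is sign σ * det M
  have inner : ∀ σ : Perm (Fin n),
      (∑ τ : Perm (Fin n), ((Perm.sign τ : ℤ) : ℂ) * ∏ j, M (σ j) (τ j))
      = ((Perm.sign σ : ℤ) : ℂ) * M.det := by
    intro σ
    have h1 : (∑ τ : Perm (Fin n), ((Perm.sign τ : ℤ) : ℂ) * ∏ j, M (σ j) (τ j))
        = (Matrix.of fun i j => M (σ j) i).det := by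
      rw [Matrix.det_apply']
      exact Finset.sum_congr rfl fun τ _ => rfl
    have h2 : (Matrix.of fun i j => M (σ j) i).det = (M.submatrix σ id).det := by
      rw [← Matrix.det_transpose (M.submatrix σ id)]
      rfl
    rw [h1, h2, Matrix.det_permute]
  -- put it together
  have hsq : ∀ σ : Perm (Fin n), ((Perm.sign σ : ℤ) : ℂ) * ((Perm.sign σ : ℤ) : ℂ) = 1 := by
    intro σ
    rw [← Int.cast_mul, ← Units.val_mul, Int.units_mul_self, Units.val_one, Int.cast_one]
  rw [key]
  have : (∑ σ : Perm (Fin n), ∑ τ : Perm (Fin n),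
      (((Perm.sign σ : ℤ) : ℂ) * ((Perm.sign τ : ℤ) : ℂ)) * ∏ j, M (σ j) (τ j))
      = (Nat.factorial n : ℂ) * M.det := by
    have : ∀ σ : Perm (Fin n),
        (∑ τ : Perm (Fin n),
          (((Perm.sign σ : ℤ) : ℂ) * ((Perm.sign τ : ℤ) : ℂ)) * ∏ j, M (σ j) (τ j))
        = M.det := by
      intro σ
      calc (∑ τ : Perm (Fin n),
            (((Perm.sign σ : ℤ) : ℂ) * ((Perm.sign τ : ℤ) : ℂ)) * ∏ j, M (σ j) (τ j))
          = ((Perm.sign σ : ℤ) : ℂ) *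
            ∑ τ : Perm (Fin n), ((Perm.sign τ : ℤ) : ℂ) * ∏ j, M (σ j) (τ j) := by
            rw [Finset.mul_sum]; refine Finset.sum_congr rfl fun τ _ => by ring
        _ = ((Perm.sign σ : ℤ) : ℂ) * (((Perm.sign σ : ℤ) : ℂ) * M.det) := by rw [inner σ]
        _ = M.det := by rw [← mul_assoc, hsq σ, one_mul]
    simp_rw [this]
    rw [Finset.sum_const, Finset.card_univ, Fintype.card_perm, Fintype.card_fin, nsmul_eq_mul]
  rw [this, ← mul_assoc, inv_mul_cancel₀ (by
    exact_mod_cast Nat.cast_ne_zero.mpr (Nat.factorial_ne_zero n)), one_mul]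
end
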